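/- Let F be a field, let n ≥ 2, and fix k ≥ 1. If a matrix A ∈ M_n(F) can be written as A = U + N, where U ∈ M_n(F) is invertible and N ∈ M_n(F) satisfies N^k = 0, then k · rank(A) ≥ n. -/
import Mathlib

open Matrix Module

lemma aux_rank_add_le {F : Type*} [Field F] {n : ℕ}
    (A B : Matrix (Fin n) (Fin n) F) : (A + B).rank ≤ A.rank + B.rank := by
  unfold Matrix.rank
  rw [mulVecLin_add]
  calc finrank F (LinearMap.range (A.mulVecLin + B.mulVecLin))
      ≤ finrank F ((LinearMap.range A.mulVecLin) ⊔ (LinearMap.range B.mulVecLin) :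
          Submodule F (Fin n → F)) := by
        apply Submodule.finrank_mono
        rintro x ⟨y, rfl⟩
        exact Submodule.add_mem_sup ⟨y, rfl⟩ ⟨y, rfl⟩
    _ ≤ _ := Submodule.finrank_add_le_finrank_add_finrank _ _

lemma aux_rank_sum_le {F : Type*} [Field F] {n : ℕ} (s : Finset ℕ)
    (f : ℕ → Matrix (Fin n) (Fin n) F) :
    (∑ j ∈ s, f j).rank ≤ ∑ j ∈ s, (f j).rank := by
  induction s using Finset.cons_induction with
  | empty => simp
  | cons a s ha ih =>
    rw [Finset.sum_cons, Finset.sum_cons]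
    exact (aux_rank_add_le _ _).trans (by omega)

lemma aux_ring_id {R : Type*} [Ring R] (X Y : R) (k : ℕ) :
    (X + Y) ^ k = (∑ j ∈ Finset.range k, Y ^ j * X * (X + Y) ^ (k - 1 - j)) + Y ^ k := by
  induction k with
  | zero => simp
  | succ k ih =>
    rw [pow_succ' (X + Y), add_mul, Finset.sum_range_succ']
    have h0 : Y ^ 0 * X * (X + Y) ^ (k + 1 - 1 - 0) = X * (X + Y) ^ k := by simp
    have h1 : ∀ i ∈ Finset.range k, Y ^ (i + 1) * X * (X + Y) ^ (k + 1 - 1 - (i + 1))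
        = Y * (Y ^ i * X * (X + Y) ^ (k - 1 - i)) := by
      intro i hi
      simp only [Finset.mem_range] at hi
      have he : k + 1 - 1 - (i + 1) = k - 1 - i := by omega
      rw [he, pow_succ', mul_assoc, mul_assoc, mul_assoc]
    rw [h0, Finset.sum_congr rfl h1, ← Finset.mul_sum, ih]
    have hc : Y ^ (k + 1) = Y * Y ^ k := pow_succ' Y k
    rw [hc]
    noncomm_ring

theorem rank_ge_of_eq_unit_add_nilpotent
    (F : Type*) [Field F] (n k : ℕ) (hn : 2 ≤ n) (hk : 1 ≤ k)
    (A : Matrix (Fin n) (Fin n) F)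
    (h : ∃ U N : Matrix (Fin n) (Fin n) F, IsUnit U ∧ N ^ k = 0 ∧ A = U + N) :
    n ≤ k * A.rank := by
  obtain ⟨U, N, hU, hNk, hA⟩ := h
  have hN : N = A + (-U) := by rw [hA]; abel
  have hid := aux_ring_id A (-U) k
  rw [← hN, hNk] at hid
  have hUk : ((-U) ^ k) = -(∑ j ∈ Finset.range k, (-U) ^ j * A * N ^ (k - 1 - j)) :=
    eq_neg_of_add_eq_zero_right hid.symm
  have hunit : IsUnit ((-U) ^ k) := (hU.neg).pow k
  have hrankU : ((-U) ^ k).rank = n := by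
    rw [Matrix.rank_of_isUnit _ hunit, Fintype.card_fin]
  have hterm : ∀ j ∈ Finset.range k, ((-U) ^ j * A * N ^ (k - 1 - j)).rank ≤ A.rank := by
    intro j _
    exact (Matrix.rank_mul_le_left _ _).trans (Matrix.rank_mul_le_right _ _)
  have hneg : ((-U) ^ k).rank = (∑ j ∈ Finset.range k, (-U) ^ j * A * N ^ (k - 1 - j)).rank := by
    rw [hUk]
    have hrw : -(∑ j ∈ Finset.range k, (-U) ^ j * A * N ^ (k - 1 - j))
        = (-1 : Matrix (Fin n) (Fin n) F) * (∑ j ∈ Finset.range k, (-U) ^ j * A * N ^ (k - 1 - j)) := by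
      rw [neg_one_mul]
    rw [hrw]
    exact Matrix.rank_mul_eq_right_of_isUnit_det _ _ ((Matrix.isUnit_iff_isUnit_det _).mp isUnit_one.neg)
  calc n = ((-U) ^ k).rank := hrankU.symm
    _ = _ := hneg
    _ ≤ ∑ j ∈ Finset.range k, ((-U) ^ j * A * N ^ (k - 1 - j)).rank := aux_rank_sum_le _ _
    _ ≤ ∑ _j ∈ Finset.range k, A.rank := Finset.sum_le_sum hterm
    _ = k * A.rank := by rw [Finset.sum_const, Finset.card_range, smul_eq_mul]
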